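/- Let θ₁ ∈ [1/e, 1] and θ₂ = 1/θ₁, and let a = θ₁/2 + 1/(2θ₁). Then with u(a,θ) = θ − a: (i) u(a,θ₂) = −u(a,θ₁), so the posterior (δ_{θ₁} + δ_{θ₂})/2 has mean a; (ii) with q(a) = a, the function θ ↦ a/θ + a(θ − a) on [1/e, e] is maximized at θ = θ₁ and θ = θ₂ (i.e., the dual constraint p(θ) ≥ V(a,θ) + q(a)u(a,θ) with p(θ) = max over matched a holds with equality exactly at the matched states). In particular, for every θ ∈ [1/e, e] and a ∈ [1, e/2 + 1/(2e)], a/θ + a(θ−a) ≤ (θ/2 + 1/(2θ))/θ + (θ/2 + 1/(2θ))·(θ − θ/2 − 1/(2θ)), with equality iff a = θ/2 + 1/(2θ). -/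
import Mathlib

/-- Negative assortative matching example: with `u(a,θ) = θ − a`, pairing `θ₁` with
`1/θ₁` induces action `a = θ₁/2 + 1/(2θ₁)`; and for `q(a) = a`, the dual objective
`a/θ + a(θ − a)` is maximized over `a` exactly at `a = θ/2 + 1/(2θ)`. -/
theorem stmt_18 (θ₁ : ℝ) (hθ₁ : θ₁ ∈ Set.Icc (Real.exp 1)⁻¹ 1) :
    ((1 / θ₁ - (θ₁ / 2 + 1 / (2 * θ₁))) = -(θ₁ - (θ₁ / 2 + 1 / (2 * θ₁)))) ∧
    (∀ θ ∈ Set.Icc (Real.exp 1)⁻¹ (Real.exp 1),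
      ∀ a ∈ Set.Icc (1:ℝ) (Real.exp 1 / 2 + 1 / (2 * Real.exp 1)),
        a / θ + a * (θ - a) ≤
          (θ / 2 + 1 / (2 * θ)) / θ +
            (θ / 2 + 1 / (2 * θ)) * (θ - (θ / 2 + 1 / (2 * θ))) ∧
        (a / θ + a * (θ - a) =
            (θ / 2 + 1 / (2 * θ)) / θ +
              (θ / 2 + 1 / (2 * θ)) * (θ - (θ / 2 + 1 / (2 * θ))) ↔
          a = θ / 2 + 1 / (2 * θ))) := by
  have hepos : (0:ℝ) < (Real.exp 1)⁻¹ := inv_pos.mpr (Real.exp_pos 1)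
  have hθ₁pos : 0 < θ₁ := lt_of_lt_of_le hepos hθ₁.1
  constructor
  · field_simp
    ring
  · intro θ hθ a _
    have hθpos : 0 < θ := lt_of_lt_of_le hepos hθ.1
    have hθne : θ ≠ 0 := ne_of_gt hθpos
    have key : (θ / 2 + 1 / (2 * θ)) / θ +
        (θ / 2 + 1 / (2 * θ)) * (θ - (θ / 2 + 1 / (2 * θ))) -
        (a / θ + a * (θ - a)) = (a - (θ / 2 + 1 / (2 * θ)))^2 := by
      field_simp
      ring
    constructor
    · nlinarith [sq_nonneg (a - (θ / 2 + 1 / (2 * θ)))]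
    · constructor
      · intro h
        have : (a - (θ / 2 + 1 / (2 * θ)))^2 = 0 := by linarith
        have := pow_eq_zero_iff (n := 2) (by norm_num) |>.mp this
        linarith
      · intro h; rw [h]
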